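/- Let ρ_{XB} be a cq-state with X ranging over {0,1}^n, let r ∈ ℕ, and let L be an n×n matrix over the two-element field F₂ with rank(L) ≥ n − r. Let ρ_{X'B} be the cq-state on X'⊗B whose conditional operators are ρ'_{B∧x'} = Σ_{x : Lx = x'} ρ_{B∧x} for x' ∈ {0,1}^n. Then H_min(X'|B)_{ρ_{X'B}} ≥ H_min(X|B)_{ρ_{XB}} − r. -/

import Mathlib

open Matrix Kronecker BigOperators Finset ComplexOrder

/-- Bit strings of length `n`. -/
abbrev BS (n : ℕ) := Fin n → Bool

/-- Embedding of a bit into the field with two elements. -/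
def toZ2 (b : Bool) : ZMod 2 := if b then 1 else 0

/-- Inner product modulo 2 of two bit strings. -/
def ipBool {n : ℕ} (x y : BS n) : Bool := decide ((∑ i, toZ2 (x i) * toZ2 (y i)) = 1)

/-- Multiplication of a bit string by a matrix over F₂. -/
def mulVecBool {n : ℕ} (L : Matrix (Fin n) (Fin n) (ZMod 2)) (x : BS n) : BS n :=
  fun i => decide ((L.mulVec fun j => toZ2 (x j)) i = 1)

/-- The `deor` extractor associated to a family of matrices over F₂. -/
def deor {n m : ℕ} (A : Fin m → Matrix (Fin n) (Fin n) (ZMod 2)) (x y : BS n) : BS m :=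
  fun i => ipBool (mulVecBool (A i) x) y

/-- Trace norm of a complex matrix: `tr √(SᴴS)`. -/
noncomputable def traceNorm {B : Type*} [Fintype B] [DecidableEq B] (S : Matrix B B ℂ) : ℝ :=
  (((Matrix.posSemidef_conjTranspose_mul_self S).1.eigenvectorUnitary.1 *
    diagonal (((↑) : ℝ → ℂ) ∘ (√·) ∘ (Matrix.posSemidef_conjTranspose_mul_self S).1.eigenvalues) *
    (star (Matrix.posSemidef_conjTranspose_mul_self S).1.eigenvectorUnitary : Matrix B B ℂ)).trace).re

/-- Trace distance between two matrices. -/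
noncomputable def traceDist {B : Type*} [Fintype B] [DecidableEq B] (ρ σ : Matrix B B ℂ) : ℝ :=
  (1/2) * traceNorm (ρ - σ)

/-- A density matrix: positive semidefinite with unit trace. -/
def IsDensity {B : Type*} [Fintype B] (ρ : Matrix B B ℂ) : Prop :=
  ρ.PosSemidef ∧ ρ.trace = 1

/-- A cq-state given by its family of (subnormalized) conditional operators. -/
def IsCQ {X B : Type*} [Fintype X] [Fintype B] (ρ : X → Matrix B B ℂ) : Prop :=
  (∀ x, (ρ x).PosSemidef) ∧ (∑ x, (ρ x).trace) = 1

/-- The full matrix `Σ_x |x⟩⟨x| ⊗ ρ_{B∧x}` of a cq-state. -/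
noncomputable def cqMatrix {X B : Type*} [Fintype X] [DecidableEq X] [Fintype B]
    (ρ : X → Matrix B B ℂ) : Matrix (X × B) (X × B) ℂ :=
  ∑ x, (Matrix.single x x (1:ℂ)) ⊗ₖ ρ x

/-- Conditional min-entropy of a cq-state: the sup over density matrices σ and reals w with
`ρ_{B∧x} ≤ 2^{-w}·σ` for all `x` (Loewner order), of `w`; `⊥ = -∞` if no such pair exists. -/
noncomputable def qCondHmin {X B : Type*} [Fintype X] [Fintype B]
    (ρ : X → Matrix B B ℂ) : EReal :=
  sSup {z : EReal | ∃ w : ℝ, z = (w : EReal) ∧ ∃ σ : Matrix B B ℂ, σ.PosSemidef ∧ σ.trace = 1 ∧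
    ∀ x, (((2:ℝ) ^ (-w)) • σ - ρ x).PosSemidef}

/-- The maximally mixed state on `m` qubits. -/
noncomputable def mixed (m : ℕ) : Matrix (BS m) (BS m) ℂ := ((2:ℂ)^m)⁻¹ • 1

/-- A finitely supported probability distribution. -/
def IsDist {α : Type*} [Fintype α] (P : α → ℝ) : Prop := (∀ a, 0 ≤ P a) ∧ ∑ a, P a = 1

/-- Total variation distance. -/
noncomputable def TV {α : Type*} [Fintype α] (Q R : α → ℝ) : ℝ := (1/2) * ∑ a, |Q a - R a|

/-- Min-entropy of a distribution. -/
noncomputable def Hmin {X : Type*} [Fintype X] [Nonempty X] (P : X → ℝ) : ℝ :=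
  - Real.logb 2 (⨆ x, P x)

/-- Conditional min-entropy of a joint distribution. -/
noncomputable def HminCond {X Z : Type*} [Fintype X] [Nonempty X] [Fintype Z]
    (P : X → Z → ℝ) : ℝ :=
  - Real.logb 2 (∑ z, ⨆ x, P x z)

/-- `(k1,k2,ε)` X1-strong two-source extractor (no side information). -/
def IsStrongExt (n1 n2 m : ℕ) (Ext : BS n1 → BS n2 → BS m) (k1 k2 ε : ℝ) : Prop :=
  ∀ (P1 : BS n1 → ℝ) (P2 : BS n2 → ℝ), IsDist P1 → IsDist P2 →
    k1 ≤ Hmin P1 → k2 ≤ Hmin P2 →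
    TV (fun p : BS m × BS n1 => ∑ x2, if Ext p.2 x2 = p.1 then P1 p.2 * P2 x2 else 0)
       (fun p : BS m × BS n1 => ((2:ℝ)^m)⁻¹ * P1 p.2) ≤ ε

/-- `(k1,k2,ε)` X1-strong two-source extractor against classical product-type knowledge. -/
def IsStrongExtCPT (n1 n2 m : ℕ) (Ext : BS n1 → BS n2 → BS m) (k1 k2 ε : ℝ) : Prop :=
  ∀ (Z1 Z2 : Type) [Fintype Z1] [Fintype Z2],
    ∀ (P1 : BS n1 → Z1 → ℝ) (P2 : BS n2 → Z2 → ℝ),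
    IsDist (fun p : BS n1 × Z1 => P1 p.1 p.2) →
    IsDist (fun p : BS n2 × Z2 => P2 p.1 p.2) →
    k1 ≤ HminCond P1 → k2 ≤ HminCond P2 →
    TV (fun q : BS m × BS n1 × Z1 × Z2 =>
          ∑ x2, if Ext q.2.1 x2 = q.1 then P1 q.2.1 q.2.2.1 * P2 x2 q.2.2.2 else 0)
       (fun q : BS m × BS n1 × Z1 × Z2 =>
          ((2:ℝ)^m)⁻¹ * P1 q.2.1 q.2.2.1 * ∑ x2, P2 x2 q.2.2.2) ≤ ε

/-- `(k1,k2,ε)` weak two-source extractor against classical product-type knowledge. -/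
def IsWeakExtCPT (n1 n2 m : ℕ) (Ext : BS n1 → BS n2 → BS m) (k1 k2 ε : ℝ) : Prop :=
  ∀ (Z1 Z2 : Type) [Fintype Z1] [Fintype Z2],
    ∀ (P1 : BS n1 → Z1 → ℝ) (P2 : BS n2 → Z2 → ℝ),
    IsDist (fun p : BS n1 × Z1 => P1 p.1 p.2) →
    IsDist (fun p : BS n2 × Z2 => P2 p.1 p.2) →
    k1 ≤ HminCond P1 → k2 ≤ HminCond P2 →
    TV (fun q : BS m × Z1 × Z2 =>
          ∑ x1, ∑ x2, if Ext x1 x2 = q.1 then P1 x1 q.2.1 * P2 x2 q.2.2 else 0)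
       (fun q : BS m × Z1 × Z2 =>
          ((2:ℝ)^m)⁻¹ * (∑ x1, P1 x1 q.2.1) * ∑ x2, P2 x2 q.2.2) ≤ ε

/-- `(k1,k2,ε)` X1-strong two-source extractor against classical knowledge in the Markov model. -/
def IsStrongExtCMarkov (n1 n2 m : ℕ) (Ext : BS n1 → BS n2 → BS m) (k1 k2 ε : ℝ) : Prop :=
  ∀ (C : Type) [Fintype C], ∀ (P : BS n1 → BS n2 → C → ℝ),
    IsDist (fun q : BS n1 × BS n2 × C => P q.1 q.2.1 q.2.2) →
    (∀ x1 x2 c, P x1 x2 c * (∑ x1', ∑ x2', P x1' x2' c)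
        = (∑ x2', P x1 x2' c) * (∑ x1', P x1' x2 c)) →
    k1 ≤ HminCond (fun x1 c => ∑ x2, P x1 x2 c) →
    k2 ≤ HminCond (fun x2 c => ∑ x1, P x1 x2 c) →
    TV (fun q : BS m × BS n1 × C => ∑ x2, if Ext q.2.1 x2 = q.1 then P q.2.1 x2 q.2.2 else 0)
       (fun q : BS m × BS n1 × C => ((2:ℝ)^m)⁻¹ * ∑ x2, P q.2.1 x2 q.2.2) ≤ ε

/-- The output cq-state `ρ_{Ext(X1,X2) X1 C1 C2}` for product-type quantum side information. -/
noncomputable def qStrongOut {n1 n2 m : ℕ} {C1 C2 : Type}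
    [Fintype C1] [Fintype C2]
    (Ext : BS n1 → BS n2 → BS m)
    (ρ1 : BS n1 → Matrix C1 C1 ℂ) (ρ2 : BS n2 → Matrix C2 C2 ℂ) :
    Matrix (BS m × (BS n1 × C1) × C2) (BS m × (BS n1 × C1) × C2) ℂ :=
  ∑ x1, ∑ x2, (Matrix.single (Ext x1 x2) (Ext x1 x2) (1:ℂ)) ⊗ₖ
    (((Matrix.single x1 x1 (1:ℂ)) ⊗ₖ ρ1 x1) ⊗ₖ ρ2 x2)

/-- `(k1,k2,ε)` X1-strong two-source extractor against quantum product-type knowledge. -/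
def IsStrongExtQPT (n1 n2 m : ℕ) (Ext : BS n1 → BS n2 → BS m) (k1 k2 ε : ℝ) : Prop :=
  ∀ (C1 C2 : Type) [Fintype C1] [DecidableEq C1] [Fintype C2] [DecidableEq C2],
    ∀ (ρ1 : BS n1 → Matrix C1 C1 ℂ) (ρ2 : BS n2 → Matrix C2 C2 ℂ),
    IsCQ ρ1 → IsCQ ρ2 →
    (k1 : EReal) ≤ qCondHmin ρ1 → (k2 : EReal) ≤ qCondHmin ρ2 →
    traceDist (qStrongOut Ext ρ1 ρ2) (mixed m ⊗ₖ (cqMatrix ρ1 ⊗ₖ ∑ x2, ρ2 x2)) ≤ ε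

/-- `(k1,k2,ε)` weak two-source extractor against quantum product-type knowledge. -/
def IsWeakExtQPT (n1 n2 m : ℕ) (Ext : BS n1 → BS n2 → BS m) (k1 k2 ε : ℝ) : Prop :=
  ∀ (C1 C2 : Type) [Fintype C1] [DecidableEq C1] [Fintype C2] [DecidableEq C2],
    ∀ (ρ1 : BS n1 → Matrix C1 C1 ℂ) (ρ2 : BS n2 → Matrix C2 C2 ℂ),
    IsCQ ρ1 → IsCQ ρ2 →
    (k1 : EReal) ≤ qCondHmin ρ1 → (k2 : EReal) ≤ qCondHmin ρ2 →
    traceDist (∑ x1, ∑ x2, (Matrix.single (Ext x1 x2) (Ext x1 x2) (1:ℂ)) ⊗ₖ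
        ((ρ1 x1) ⊗ₖ ρ2 x2))
      (mixed m ⊗ₖ ((∑ x1, ρ1 x1) ⊗ₖ ∑ x2, ρ2 x2)) ≤ ε

/-- `(k1,k2,ε)` X1-strong two-source extractor against quantum knowledge in the Markov model,
in decomposed form. -/
def IsStrongExtQMarkov (n1 n2 m : ℕ) (Ext : BS n1 → BS n2 → BS m) (k1 k2 ε : ℝ) : Prop :=
  ∀ (Z C1 C2 : Type) [Fintype Z] [DecidableEq Z]
      [Fintype C1] [DecidableEq C1] [Fintype C2] [DecidableEq C2],
    ∀ (P : Z → ℝ) (ρ1 : Z → BS n1 → Matrix C1 C1 ℂ) (ρ2 : Z → BS n2 → Matrix C2 C2 ℂ),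
    IsDist P → (∀ z, IsCQ (ρ1 z)) → (∀ z, IsCQ (ρ2 z)) →
    (k1 : EReal) ≤ qCondHmin (fun x1 : BS n1 =>
      ∑ z, P z • (((ρ1 z x1) ⊗ₖ ∑ x2, ρ2 z x2) ⊗ₖ Matrix.single z z (1:ℂ))) →
    (k2 : EReal) ≤ qCondHmin (fun x2 : BS n2 =>
      ∑ z, P z • (((∑ x1, ρ1 z x1) ⊗ₖ ρ2 z x2) ⊗ₖ Matrix.single z z (1:ℂ))) →
    traceDist
      (∑ x1, ∑ x2, ∑ z, P z •
        ((Matrix.single (Ext x1 x2) (Ext x1 x2) (1:ℂ)) ⊗ₖ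
          ((Matrix.single x1 x1 (1:ℂ)) ⊗ₖ
            (((ρ1 z x1) ⊗ₖ ρ2 z x2) ⊗ₖ Matrix.single z z (1:ℂ)))))
      (mixed m ⊗ₖ cqMatrix (fun x1 : BS n1 =>
        ∑ z, P z • (((ρ1 z x1) ⊗ₖ ∑ x2, ρ2 z x2) ⊗ₖ Matrix.single z z (1:ℂ))))
      ≤ ε

section Aux

lemma toZ2_injective : Function.Injective toZ2 := by decide

lemma decide_eq_iff_toZ2 (a : ZMod 2) (b : Bool) : (decide (a = 1) = b) ↔ a = toZ2 b := by
  revert a b; decide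

/-- The fiber of `mulVecBool L` has at most `2 ^ r` elements when `rank L ≥ n - r`. -/
lemma fiber_card_le {n r : ℕ} (L : Matrix (Fin n) (Fin n) (ZMod 2)) (hL : n - r ≤ L.rank)
    (x' : BS n) :
    (Finset.univ.filter (fun x : BS n => mulVecBool L x = x')).card ≤ 2 ^ r := by
  classical
  set F := Finset.univ.filter (fun x : BS n => mulVecBool L x = x') with hF
  rcases F.eq_empty_or_nonempty with h | ⟨x₀, hx₀⟩
  · simp [h]
  · set v : BS n → (Fin n → ZMod 2) := fun x j => toZ2 (x j) with hv
    have hmem : ∀ x ∈ F, L.mulVec (v x) = v x' := by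
      intro x hx
      have hx' : mulVecBool L x = x' := by simpa [hF] using hx
      funext i
      have := congrFun hx' i
      simpa [mulVecBool, v, decide_eq_iff_toZ2] using this
    set K := LinearMap.ker L.mulVecLin with hK
    have hker : ∀ x ∈ F, v x - v x₀ ∈ K := by
      intro x hx
      simp only [hK, LinearMap.mem_ker, map_sub, Matrix.mulVecLin_apply]
      rw [hmem x hx, hmem x₀ hx₀, sub_self]
    -- card bound via injection into the kernel
    have hcard : F.card ≤ Fintype.card K := by
      have hinj : Function.Injective
          (fun x : {y // y ∈ F} => (⟨v x.1 - v x₀, hker x.1 x.2⟩ : K)) := by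
        intro a b hab
        have h1 : v a.1 - v x₀ = v b.1 - v x₀ := by
          simpa using congrArg Subtype.val hab
        have h2 : v a.1 = v b.1 := by
          have := sub_left_injective h1
          exact this
        apply Subtype.ext
        funext j
        exact toZ2_injective (congrFun h2 j)
      calc F.card = Fintype.card {y // y ∈ F} := (Fintype.card_coe F).symm
        _ ≤ Fintype.card K := Fintype.card_le_of_injective _ hinj
    -- card of kernel
    have hrank : Module.finrank (ZMod 2) K ≤ r := by
      have h1 := LinearMap.finrank_range_add_finrank_ker L.mulVecLin
      have h2 : Module.finrank (ZMod 2) (Fin n → ZMod 2) = n := Module.finrank_fin_fun _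
      have h3 : L.rank = Module.finrank (ZMod 2) (LinearMap.range L.mulVecLin) := rfl
      rw [h2, ← hK] at h1
      omega
    have hcardK : Fintype.card K = 2 ^ Module.finrank (ZMod 2) K := by
      have := Module.card_eq_pow_finrank (K := ZMod 2) (V := K)
      simpa [ZMod.card] using this
    calc F.card ≤ Fintype.card K := hcard
      _ = 2 ^ Module.finrank (ZMod 2) K := hcardK
      _ ≤ 2 ^ r := Nat.pow_le_pow_right (by norm_num) hrank

lemma psd_real_smul {B : Type} [Fintype B] {σ : Matrix B B ℂ} (hσ : σ.PosSemidef)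
    {c : ℝ} (hc : 0 ≤ c) : (c • σ).PosSemidef := by
  have hcs : c • σ = ((c : ℂ)) • σ := by
    ext i j; simp [Matrix.smul_apply, Complex.real_smul]
  rw [hcs]
  constructor
  · unfold Matrix.IsHermitian
    rw [Matrix.conjTranspose_smul, Complex.star_def, Complex.conj_ofReal, hσ.1]
  · intro x
    exact (hσ.smul (Complex.zero_le_real.mpr hc)).2 x

lemma psd_sum {ι B : Type*} [Fintype B] (s : Finset ι) (f : ι → Matrix B B ℂ)
    (h : ∀ i ∈ s, (f i).PosSemidef) : (∑ i ∈ s, f i).PosSemidef :=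
  Finset.sum_induction f _ (fun _ _ ha hb => ha.add hb) Matrix.PosSemidef.zero h

end Aux

theorem stmt1 {n r : ℕ} {B : Type} [Fintype B]
    (ρ : BS n → Matrix B B ℂ) (hρ : IsCQ ρ)
    (L : Matrix (Fin n) (Fin n) (ZMod 2)) (hL : n - r ≤ L.rank) :
    qCondHmin ρ - ((r : ℝ) : EReal)
      ≤ qCondHmin (fun x' : BS n =>
          ∑ x ∈ Finset.univ.filter (fun x : BS n => mulVecBool L x = x'), ρ x) := by
    classical
  rw [qCondHmin, qCondHmin]
  rw [EReal.sub_le_iff_le_add (Or.inl (EReal.coe_ne_bot _)) (Or.inl (EReal.coe_ne_top _))]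
  apply sSup_le
  rintro z ⟨w, rfl, σ, hσ, hσtr, hdom⟩
  have hk : ∀ x' : BS n,
      ((Finset.univ.filter (fun x : BS n => mulVecBool L x = x')).card : ℝ) ≤ 2 ^ r :=
    fun x' => by exact_mod_cast fiber_card_le L hL x'
  have hmem : ((w - r : ℝ) : EReal) ∈ {z : EReal | ∃ w' : ℝ, z = (w' : EReal) ∧
      ∃ σ' : Matrix B B ℂ, σ'.PosSemidef ∧ σ'.trace = 1 ∧
      ∀ x', (((2:ℝ) ^ (-w')) • σ' -
        ∑ x ∈ Finset.univ.filter (fun x : BS n => mulVecBool L x = x'), ρ x).PosSemidef} := by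
    refine ⟨w - r, rfl, σ, hσ, hσtr, fun x' => ?_⟩
    set F := Finset.univ.filter (fun x : BS n => mulVecBool L x = x') with hF
    have h2w : (0:ℝ) < (2:ℝ) ^ (-w) := Real.rpow_pos_of_pos (by norm_num) _
    have hpow : (2:ℝ) ^ (-(w - r)) = (2:ℝ) ^ (-w) * (2:ℝ) ^ (r:ℕ) := by
      rw [← Real.rpow_natCast 2 r, ← Real.rpow_add (by norm_num)]
      congr 1; ring
    have hc : 0 ≤ (2:ℝ) ^ (-(w - r)) - (F.card : ℝ) * (2:ℝ) ^ (-w) := by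
      rw [hpow]
      have hkk := hk x'
      nlinarith [hkk, h2w.le]
    have heq : ((2:ℝ) ^ (-(w - r))) • σ - ∑ x ∈ F, ρ x
        = (((2:ℝ) ^ (-(w - r)) - (F.card : ℝ) * (2:ℝ) ^ (-w)) • σ)
          + ∑ x ∈ F, (((2:ℝ) ^ (-w)) • σ - ρ x) := by
      rw [Finset.sum_sub_distrib, Finset.sum_const, ← Nat.cast_smul_eq_nsmul ℝ, smul_smul,
        sub_smul]
      abel
    rw [heq]
    exact (psd_real_smul hσ hc).add (psd_sum _ _ fun x _ => hdom x)
  calc (w : EReal) = ((w - r : ℝ) : EReal) + ((r : ℝ) : EReal) := by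
        rw [← EReal.coe_add]; norm_num
    _ ≤ _ + ((r : ℝ) : EReal) := add_le_add_left (le_sSup hmem) _
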